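/- The generating function F(x) = sum_{n>=0} e_n x^n, where e_n is the number of permutations of {1,...,n} avoiding a nonconsecutive 132 pattern, satisfies (x+x^3) F(x)^2 - F(x) + 1 = 0. -/

import Mathlib

/-- A permutation avoids a nonconsecutive 132 pattern if every occurrence of 132
(indices `i < j < k` with `π i < π k < π j`) occupies three consecutive positions. -/
def AvoidsNonconsec132 {n : ℕ} (π : Equiv.Perm (Fin n)) : Prop :=
  ∀ i j k : Fin n, i < j → j < k → π i < π k → π k < π j →
    (j : ℕ) = (i : ℕ) + 1 ∧ (k : ℕ) = (i : ℕ) + 2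

/-- A (consecutive) occurrence of 132 starting at 0-indexed position `p`. -/
def Occ132At {n : ℕ} (π : Equiv.Perm (Fin n)) (p : ℕ) : Prop :=
  ∃ h : p + 2 < n,
    π ⟨p, by omega⟩ < π ⟨p + 2, h⟩ ∧ π ⟨p + 2, h⟩ < π ⟨p + 1, by omega⟩

/-- `e n`: the number of permutations of `{1,…,n}` avoiding a nonconsecutive 132 pattern. -/
noncomputable def e (n : ℕ) : ℕ :=
  Nat.card {π : Equiv.Perm (Fin n) // AvoidsNonconsec132 π}

set_option maxHeartbeats 1000000

namespace A132
open Finset Equiv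

instance decAvoid (n : ℕ) : DecidablePred (@AvoidsNonconsec132 n) := fun _ => by
  unfold AvoidsNonconsec132; infer_instance

variable {n : ℕ}

/-- If every value on `T` is below every value off `T`, values on `T` are `< T.card`. -/
lemma low_val (π : Equiv.Perm (Fin n)) (T : Finset (Fin n))
    (h : ∀ x ∈ T, ∀ y, y ∉ T → π x < π y) {x : Fin n} (hx : x ∈ T) :
    (π x : ℕ) < T.card := by
  have hsub : Finset.Iic (π x) ⊆ T.image π := by
    intro v hv
    simp only [Finset.mem_Iic] at hv
    by_contra hvn
    have hm : π.symm v ∉ T := fun hm => hvn (Finset.mem_image.2 ⟨_, hm, by simp⟩)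
    have := h x hx _ hm
    rw [Equiv.apply_symm_apply] at this
    exact absurd (lt_of_lt_of_le this hv) (lt_irrefl _)
  have h1 : (Finset.Iic (π x)).card ≤ (T.image π).card := Finset.card_le_card hsub
  rw [Fin.card_Iic, Finset.card_image_of_injective _ π.injective] at h1
  omega

/-- If every value on `T` is below every value off `T`, values off `T` are `≥ T.card`. -/
lemma high_val (π : Equiv.Perm (Fin n)) (T : Finset (Fin n))
    (h : ∀ x ∈ T, ∀ y, y ∉ T → π x < π y) {y : Fin n} (hy : y ∉ T) :
    T.card ≤ (π y : ℕ) := by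
  have hsub : T.image (fun x => (π x : ℕ)) ⊆ Finset.range (π y) := by
    intro v hv
    obtain ⟨x, hx, rfl⟩ := Finset.mem_image.1 hv
    exact Finset.mem_range.2 (h x hx y hy)
  have h1 := Finset.card_le_card hsub
  rw [Finset.card_image_of_injective _ (fun u v huv => π.injective (Fin.ext huv)),
    Finset.card_range] at h1
  exact h1

def glueFunA {a b : ℕ} (α : Equiv.Perm (Fin a)) (β : Equiv.Perm (Fin b)) :
    Fin (a + b + 1) → Fin (a + b + 1) := fun i =>
  if h : (i : ℕ) < a then ⟨b + α ⟨i, h⟩, by have := (α ⟨i, h⟩).isLt; omega⟩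
  else if h2 : (i : ℕ) = a then ⟨a + b, by omega⟩
  else
    have hb : (i : ℕ) - (a + 1) < b := by have := i.isLt; omega
    ⟨β ⟨(i : ℕ) - (a + 1), hb⟩, by have := (β ⟨(i : ℕ) - (a + 1), hb⟩).isLt; omega⟩

lemma glueFunA_lt {a b : ℕ} (α : Equiv.Perm (Fin a)) (β : Equiv.Perm (Fin b))
    {i : Fin (a + b + 1)} (h : (i : ℕ) < a) :
    (glueFunA α β i : ℕ) = b + α ⟨i, h⟩ := by
  simp only [glueFunA, dif_pos h]

lemma glueFunA_eq {a b : ℕ} (α : Equiv.Perm (Fin a)) (β : Equiv.Perm (Fin b))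
    {i : Fin (a + b + 1)} (h : (i : ℕ) = a) :
    (glueFunA α β i : ℕ) = a + b := by
  simp only [glueFunA, dif_neg (by omega : ¬ (i:ℕ) < a), dif_pos h]

lemma glueFunA_gt {a b : ℕ} (α : Equiv.Perm (Fin a)) (β : Equiv.Perm (Fin b))
    {i : Fin (a + b + 1)} (h : a < (i : ℕ)) (hb : (i : ℕ) - (a + 1) < b) :
    (glueFunA α β i : ℕ) = β ⟨(i : ℕ) - (a + 1), hb⟩ := by
  simp only [glueFunA, dif_neg (by omega : ¬ (i:ℕ) < a), dif_neg (by omega : ¬ (i:ℕ) = a)]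

lemma glueFunA_inj {a b : ℕ} (α : Equiv.Perm (Fin a)) (β : Equiv.Perm (Fin b)) :
    Function.Injective (glueFunA α β) := by
  intro i j hij
  have hij' : (glueFunA α β i : ℕ) = (glueFunA α β j : ℕ) := congrArg Fin.val hij
  have hi := i.isLt; have hj := j.isLt
  rcases lt_trichotomy (i : ℕ) a with h1 | h1 | h1 <;>
    rcases lt_trichotomy (j : ℕ) a with h2 | h2 | h2
  · rw [glueFunA_lt α β h1, glueFunA_lt α β h2] at hij'
    have : α ⟨i, h1⟩ = α ⟨j, h2⟩ := Fin.ext (by omega)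
    have := congrArg Fin.val (α.injective this)
    exact Fin.ext this
  · rw [glueFunA_lt α β h1, glueFunA_eq α β h2] at hij'
    have := (α ⟨i, h1⟩).isLt; omega
  · have hbj : (j : ℕ) - (a + 1) < b := by omega
    rw [glueFunA_lt α β h1, glueFunA_gt α β h2 hbj] at hij'
    have := (β ⟨(j:ℕ) - (a+1), hbj⟩).isLt; omega
  · rw [glueFunA_eq α β h1, glueFunA_lt α β h2] at hij'
    have := (α ⟨j, h2⟩).isLt; omega
  · exact Fin.ext (by omega)
  · have hbj : (j : ℕ) - (a + 1) < b := by omega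
    rw [glueFunA_eq α β h1, glueFunA_gt α β h2 hbj] at hij'
    have := (β ⟨(j:ℕ) - (a+1), hbj⟩).isLt; omega
  · have hbi : (i : ℕ) - (a + 1) < b := by omega
    rw [glueFunA_gt α β h1 hbi, glueFunA_lt α β h2] at hij'
    have := (β ⟨(i:ℕ) - (a+1), hbi⟩).isLt; omega
  · have hbi : (i : ℕ) - (a + 1) < b := by omega
    rw [glueFunA_gt α β h1 hbi, glueFunA_eq α β h2] at hij'
    have := (β ⟨(i:ℕ) - (a+1), hbi⟩).isLt; omega
  · have hbi : (i : ℕ) - (a + 1) < b := by omega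
    have hbj : (j : ℕ) - (a + 1) < b := by omega
    rw [glueFunA_gt α β h1 hbi, glueFunA_gt α β h2 hbj] at hij'
    have : β ⟨(i:ℕ) - (a+1), hbi⟩ = β ⟨(j:ℕ) - (a+1), hbj⟩ := Fin.ext hij'
    have := β.injective this
    have := congrArg Fin.val this
    simp only at this
    exact Fin.ext (by omega)

noncomputable def glueA {a b : ℕ} (α : Equiv.Perm (Fin a)) (β : Equiv.Perm (Fin b)) :
    Equiv.Perm (Fin (a + b + 1)) :=
  Equiv.ofBijective _ ((Finite.injective_iff_bijective).1 (glueFunA_inj α β))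

lemma glueA_apply {a b : ℕ} (α : Equiv.Perm (Fin a)) (β : Equiv.Perm (Fin b)) (i) :
    glueA α β i = glueFunA α β i := rfl


def glueFunB {a b : ℕ} (α : Equiv.Perm (Fin a)) (β : Equiv.Perm (Fin b)) :
    Fin (a + b + 3) → Fin (a + b + 3) := fun i =>
  if h : (i : ℕ) < a then ⟨b + 2 + α ⟨i, h⟩, by have := (α ⟨i, h⟩).isLt; omega⟩
  else if h2 : (i : ℕ) = a then ⟨b, by omega⟩
  else if h3 : (i : ℕ) = a + 1 then ⟨a + b + 2, by omega⟩
  else if h4 : (i : ℕ) = a + 2 then ⟨b + 1, by omega⟩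
  else
    have hb : (i : ℕ) - (a + 3) < b := by have := i.isLt; omega
    ⟨β ⟨(i : ℕ) - (a + 3), hb⟩, by have := (β ⟨(i : ℕ) - (a + 3), hb⟩).isLt; omega⟩

lemma glueFunB_lt {a b : ℕ} (α : Equiv.Perm (Fin a)) (β : Equiv.Perm (Fin b))
    {i : Fin (a + b + 3)} (h : (i : ℕ) < a) :
    (glueFunB α β i : ℕ) = b + 2 + α ⟨i, h⟩ := by
  simp only [glueFunB, dif_pos h]

lemma glueFunB_eq0 {a b : ℕ} (α : Equiv.Perm (Fin a)) (β : Equiv.Perm (Fin b))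
    {i : Fin (a + b + 3)} (h : (i : ℕ) = a) :
    (glueFunB α β i : ℕ) = b := by
  simp only [glueFunB, dif_neg (by omega : ¬ (i:ℕ) < a), dif_pos h]

lemma glueFunB_eq1 {a b : ℕ} (α : Equiv.Perm (Fin a)) (β : Equiv.Perm (Fin b))
    {i : Fin (a + b + 3)} (h : (i : ℕ) = a + 1) :
    (glueFunB α β i : ℕ) = a + b + 2 := by
  simp only [glueFunB, dif_neg (by omega : ¬ (i:ℕ) < a), dif_neg (by omega : ¬ (i:ℕ) = a),
    dif_pos h]

lemma glueFunB_eq2 {a b : ℕ} (α : Equiv.Perm (Fin a)) (β : Equiv.Perm (Fin b))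
    {i : Fin (a + b + 3)} (h : (i : ℕ) = a + 2) :
    (glueFunB α β i : ℕ) = b + 1 := by
  simp only [glueFunB, dif_neg (by omega : ¬ (i:ℕ) < a), dif_neg (by omega : ¬ (i:ℕ) = a),
    dif_neg (by omega : ¬ (i:ℕ) = a + 1), dif_pos h]

lemma glueFunB_gt {a b : ℕ} (α : Equiv.Perm (Fin a)) (β : Equiv.Perm (Fin b))
    {i : Fin (a + b + 3)} (h : a + 2 < (i : ℕ)) (hb : (i : ℕ) - (a + 3) < b) :
    (glueFunB α β i : ℕ) = β ⟨(i : ℕ) - (a + 3), hb⟩ := by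
  simp only [glueFunB, dif_neg (by omega : ¬ (i:ℕ) < a), dif_neg (by omega : ¬ (i:ℕ) = a),
    dif_neg (by omega : ¬ (i:ℕ) = a + 1), dif_neg (by omega : ¬ (i:ℕ) = a + 2)]

/-- Region-based value description for case B (value facts only). -/
lemma glueFunB_cases {a b : ℕ} (α : Equiv.Perm (Fin a)) (β : Equiv.Perm (Fin b))
    (i : Fin (a + b + 3)) :
    ((i : ℕ) < a ∧ b + 2 ≤ (glueFunB α β i : ℕ) ∧ (glueFunB α β i : ℕ) < a + b + 2) ∨
    ((i : ℕ) = a ∧ (glueFunB α β i : ℕ) = b) ∨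
    ((i : ℕ) = a + 1 ∧ (glueFunB α β i : ℕ) = a + b + 2) ∨
    ((i : ℕ) = a + 2 ∧ (glueFunB α β i : ℕ) = b + 1) ∨
    (a + 2 < (i : ℕ) ∧ (glueFunB α β i : ℕ) < b) := by
  have hi := i.isLt
  rcases lt_trichotomy (i : ℕ) a with h | h | h
  · left
    refine ⟨h, ?_⟩
    rw [glueFunB_lt α β h]
    have := (α ⟨i, h⟩).isLt; omega
  · exact Or.inr (Or.inl ⟨h, glueFunB_eq0 α β h⟩)
  · rcases Nat.lt_or_ge (i : ℕ) (a + 2) with h2 | h2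
    · have h1 : (i : ℕ) = a + 1 := by omega
      exact Or.inr (Or.inr (Or.inl ⟨h1, glueFunB_eq1 α β h1⟩))
    · rcases Nat.eq_or_lt_of_le h2 with h3 | h3
      · exact Or.inr (Or.inr (Or.inr (Or.inl ⟨h3.symm, glueFunB_eq2 α β h3.symm⟩)))
      · have hb : (i : ℕ) - (a + 3) < b := by omega
        refine Or.inr (Or.inr (Or.inr (Or.inr ⟨h3, ?_⟩)))
        rw [glueFunB_gt α β h3 hb]
        exact (β _).isLt

lemma glueFunB_inj {a b : ℕ} (α : Equiv.Perm (Fin a)) (β : Equiv.Perm (Fin b)) :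
    Function.Injective (glueFunB α β) := by
  intro i j hij
  have hij' : (glueFunB α β i : ℕ) = (glueFunB α β j : ℕ) := congrArg Fin.val hij
  rcases glueFunB_cases α β i with ⟨h1, hv1⟩ | ⟨h1, hv1⟩ | ⟨h1, hv1⟩ | ⟨h1, hv1⟩ | ⟨h1, hv1⟩ <;>
    rcases glueFunB_cases α β j with ⟨h2, hv2⟩ | ⟨h2, hv2⟩ | ⟨h2, hv2⟩ | ⟨h2, hv2⟩ | ⟨h2, hv2⟩ <;>
      try (exfalso; omega)
  · rw [glueFunB_lt α β h1, glueFunB_lt α β h2] at hij'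
    have : α ⟨i, h1⟩ = α ⟨j, h2⟩ := Fin.ext (by omega)
    have := congrArg Fin.val (α.injective this)
    exact Fin.ext this
  · exact Fin.ext (by omega)
  · exact Fin.ext (by omega)
  · exact Fin.ext (by omega)
  · have hbi : (i : ℕ) - (a + 3) < b := by have := i.isLt; omega
    have hbj : (j : ℕ) - (a + 3) < b := by have := j.isLt; omega
    rw [glueFunB_gt α β h1 hbi, glueFunB_gt α β h2 hbj] at hij'
    have : β ⟨(i:ℕ) - (a+3), hbi⟩ = β ⟨(j:ℕ) - (a+3), hbj⟩ := Fin.ext hij'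
    have := congrArg Fin.val (β.injective this)
    simp only at this
    exact Fin.ext (by omega)

noncomputable def glueB {a b : ℕ} (α : Equiv.Perm (Fin a)) (β : Equiv.Perm (Fin b)) :
    Equiv.Perm (Fin (a + b + 3)) :=
  Equiv.ofBijective _ ((Finite.injective_iff_bijective).1 (glueFunB_inj α β))

lemma glueB_apply {a b : ℕ} (α : Equiv.Perm (Fin a)) (β : Equiv.Perm (Fin b)) (i) :
    glueB α β i = glueFunB α β i := rfl


/-- Position of the maximal value. -/
def P {m : ℕ} (π : Equiv.Perm (Fin (m + 1))) : ℕ := (π.symm (Fin.last m) : ℕ)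

lemma P_lt {m : ℕ} (π : Equiv.Perm (Fin (m + 1))) : P π < m + 1 := (π.symm _).isLt

lemma apply_P {m : ℕ} (π : Equiv.Perm (Fin (m + 1))) :
    π ⟨P π, P_lt π⟩ = Fin.last m := by
  have : (⟨P π, P_lt π⟩ : Fin (m+1)) = π.symm (Fin.last m) := rfl
  rw [this, Equiv.apply_symm_apply]

lemma P_eq_of_apply {m : ℕ} (π : Equiv.Perm (Fin (m + 1))) {i : Fin (m+1)}
    (h : π i = Fin.last m) : P π = (i : ℕ) := by
  have : i = π.symm (Fin.last m) := by rw [← h, Equiv.symm_apply_apply]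
  rw [P, ← this]

/-- The "case B" classifier. -/
def Q {m : ℕ} (π : Equiv.Perm (Fin (m + 1))) : Prop :=
  1 ≤ P π ∧ ∃ h2 : P π + 1 < m + 1,
    π ⟨P π - 1, by omega⟩ < π ⟨P π + 1, h2⟩

instance decQ {m : ℕ} (π : Equiv.Perm (Fin (m + 1))) : Decidable (Q π) := by
  unfold Q; infer_instance

lemma glueFunA_cases {a b : ℕ} (α : Equiv.Perm (Fin a)) (β : Equiv.Perm (Fin b))
    (i : Fin (a + b + 1)) :
    ((i : ℕ) < a ∧ b ≤ (glueFunA α β i : ℕ) ∧ (glueFunA α β i : ℕ) < a + b) ∨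
    ((i : ℕ) = a ∧ (glueFunA α β i : ℕ) = a + b) ∨
    (a < (i : ℕ) ∧ (glueFunA α β i : ℕ) < b) := by
  have hi := i.isLt
  rcases lt_trichotomy (i : ℕ) a with h | h | h
  · left
    refine ⟨h, ?_⟩
    rw [glueFunA_lt α β h]
    have := (α ⟨i, h⟩).isLt; omega
  · exact Or.inr (Or.inl ⟨h, glueFunA_eq α β h⟩)
  · have hb : (i : ℕ) - (a + 1) < b := by omega
    refine Or.inr (Or.inr ⟨h, ?_⟩)
    rw [glueFunA_gt α β h hb]
    exact (β _).isLt

lemma glueA_avoids {a b : ℕ} (α : Equiv.Perm (Fin a)) (β : Equiv.Perm (Fin b))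
    (hα : AvoidsNonconsec132 α) (hβ : AvoidsNonconsec132 β) :
    AvoidsNonconsec132 (glueA α β) := by
  intro i j k hij hjk hik hkj
  rw [Fin.lt_def] at hij hjk
  have hik' : (glueFunA α β i : ℕ) < (glueFunA α β k : ℕ) := hik
  have hkj' : (glueFunA α β k : ℕ) < (glueFunA α β j : ℕ) := hkj
  rcases glueFunA_cases α β i with ⟨h1, hv1⟩ | ⟨h1, hv1⟩ | ⟨h1, hv1⟩ <;>
    rcases glueFunA_cases α β j with ⟨h2, hv2⟩ | ⟨h2, hv2⟩ | ⟨h2, hv2⟩ <;>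
      rcases glueFunA_cases α β k with ⟨h3, hv3⟩ | ⟨h3, hv3⟩ | ⟨h3, hv3⟩ <;> try omega
  · -- all inside α
    rw [glueFunA_lt α β h1, glueFunA_lt α β h3] at hik'
    rw [glueFunA_lt α β h3, glueFunA_lt α β h2] at hkj'
    exact hα ⟨i, h1⟩ ⟨j, h2⟩ ⟨k, h3⟩ (Fin.mk_lt_mk.mpr hij)
      (Fin.mk_lt_mk.mpr hjk) (Fin.lt_def.mpr (by omega))
      (Fin.lt_def.mpr (by omega))
  · -- all inside β
    have hb1 : (i : ℕ) - (a + 1) < b := by have := i.isLt; omega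
    have hb2 : (j : ℕ) - (a + 1) < b := by have := j.isLt; omega
    have hb3 : (k : ℕ) - (a + 1) < b := by have := k.isLt; omega
    rw [glueFunA_gt α β h1 hb1, glueFunA_gt α β h3 hb3] at hik'
    rw [glueFunA_gt α β h3 hb3, glueFunA_gt α β h2 hb2] at hkj'
    have := hβ ⟨(i:ℕ) - (a+1), hb1⟩ ⟨(j:ℕ) - (a+1), hb2⟩ ⟨(k:ℕ) - (a+1), hb3⟩
      (Fin.mk_lt_mk.mpr (by omega)) (Fin.mk_lt_mk.mpr (by omega))
      (Fin.lt_def.mpr (by omega)) (Fin.lt_def.mpr (by omega))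
    simp only at this
    omega

lemma glueB_avoids {a b : ℕ} (α : Equiv.Perm (Fin a)) (β : Equiv.Perm (Fin b))
    (hα : AvoidsNonconsec132 α) (hβ : AvoidsNonconsec132 β) :
    AvoidsNonconsec132 (glueB α β) := by
  intro i j k hij hjk hik hkj
  rw [Fin.lt_def] at hij hjk
  have hik' : (glueFunB α β i : ℕ) < (glueFunB α β k : ℕ) := hik
  have hkj' : (glueFunB α β k : ℕ) < (glueFunB α β j : ℕ) := hkj
  rcases glueFunB_cases α β i with ⟨h1, hv1⟩ | ⟨h1, hv1⟩ | ⟨h1, hv1⟩ | ⟨h1, hv1⟩ | ⟨h1, hv1⟩ <;>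
    rcases glueFunB_cases α β j with ⟨h2, hv2⟩ | ⟨h2, hv2⟩ | ⟨h2, hv2⟩ | ⟨h2, hv2⟩ | ⟨h2, hv2⟩ <;>
      rcases glueFunB_cases α β k with ⟨h3, hv3⟩ | ⟨h3, hv3⟩ | ⟨h3, hv3⟩ | ⟨h3, hv3⟩ | ⟨h3, hv3⟩ <;>
        try omega
  · -- all inside α
    obtain ⟨h1, hv1a, hv1b⟩ := And.intro h1 hv1
    rw [glueFunB_lt α β h1, glueFunB_lt α β h3] at hik'
    rw [glueFunB_lt α β h3, glueFunB_lt α β h2] at hkj'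
    exact hα ⟨i, h1⟩ ⟨j, h2⟩ ⟨k, h3⟩ (Fin.mk_lt_mk.mpr hij)
      (Fin.mk_lt_mk.mpr hjk) (Fin.lt_def.mpr (by omega))
      (Fin.lt_def.mpr (by omega))
  · -- all inside β
    have hb1 : (i : ℕ) - (a + 3) < b := by have := i.isLt; omega
    have hb2 : (j : ℕ) - (a + 3) < b := by have := j.isLt; omega
    have hb3 : (k : ℕ) - (a + 3) < b := by have := k.isLt; omega
    rw [glueFunB_gt α β h1 hb1, glueFunB_gt α β h3 hb3] at hik'
    rw [glueFunB_gt α β h3 hb3, glueFunB_gt α β h2 hb2] at hkj'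
    have := hβ ⟨(i:ℕ) - (a+3), hb1⟩ ⟨(j:ℕ) - (a+3), hb2⟩ ⟨(k:ℕ) - (a+3), hb3⟩
      (Fin.mk_lt_mk.mpr (by omega)) (Fin.mk_lt_mk.mpr (by omega))
      (Fin.lt_def.mpr (by omega)) (Fin.lt_def.mpr (by omega))
    simp only at this
    omega


lemma glueA_P {a b : ℕ} (α : Equiv.Perm (Fin a)) (β : Equiv.Perm (Fin b)) :
    P (glueA α β) = a := by
  have h : glueA α β ⟨a, by omega⟩ = Fin.last (a + b) :=
    Fin.ext (glueFunA_eq α β rfl)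
  exact P_eq_of_apply _ h

lemma glueA_notQ {a b : ℕ} (α : Equiv.Perm (Fin a)) (β : Equiv.Perm (Fin b)) :
    ¬ Q (glueA α β) := by
  rintro ⟨h1, h2, hlt⟩
  have hP := glueA_P α β
  have key : ∀ u v : Fin (a + b + 1), (u : ℕ) = a - 1 → (v : ℕ) = a + 1 →
      ¬ (glueA α β u < glueA α β v) := by
    intro u v hu hv hc
    have hua : (u : ℕ) < a := by omega
    have hbx : (v : ℕ) - (a + 1) < b := by have := v.isLt; omega
    have e1 : (glueFunA α β u : ℕ) = b + α ⟨u, hua⟩ := glueFunA_lt α β hua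
    have e2 : (glueFunA α β v : ℕ) = β ⟨(v : ℕ) - (a + 1), hbx⟩ := glueFunA_gt α β (by omega) hbx
    have hc' : (glueFunA α β u : ℕ) < (glueFunA α β v : ℕ) := hc
    have := (β ⟨(v : ℕ) - (a + 1), hbx⟩).isLt
    omega
  exact key _ _ (by simp; omega) (by simp; omega) hlt

lemma glueB_P {a b : ℕ} (α : Equiv.Perm (Fin a)) (β : Equiv.Perm (Fin b)) :
    P (glueB α β) = a + 1 := by
  have h : glueB α β ⟨a + 1, by omega⟩ = Fin.last (a + b + 2) :=
    Fin.ext (glueFunB_eq1 α β rfl)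
  exact P_eq_of_apply _ h

lemma glueB_Q {a b : ℕ} (α : Equiv.Perm (Fin a)) (β : Equiv.Perm (Fin b)) :
    Q (glueB α β) := by
  have hP := glueB_P α β
  refine ⟨by omega, by omega, ?_⟩
  have key : ∀ u v : Fin (a + b + 3), (u : ℕ) = a → (v : ℕ) = a + 2 →
      glueB α β u < glueB α β v := by
    intro u v hu hv
    have e1 : (glueFunB α β u : ℕ) = b := glueFunB_eq0 α β hu
    have e2 : (glueFunB α β v : ℕ) = b + 1 := glueFunB_eq2 α β hv
    show (glueFunB α β u : ℕ) < (glueFunB α β v : ℕ)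
    omega
  exact key _ _ (by simp; omega) (by simp; omega)


lemma card_filter_gt (n c : ℕ) :
    ((Finset.univ : Finset (Fin n)).filter (fun x : Fin n => c < (x : ℕ))).card = n - (c + 1) := by
  rw [← Nat.card_Ico (c + 1) n]
  refine Finset.card_bij (fun x _ => (x : ℕ)) ?_ ?_ ?_
  · intro x hx
    simp only [Finset.mem_filter] at hx
    simp only [Finset.mem_Ico]
    have := x.isLt; omega
  · intro x _ y _ h; exact Fin.ext h
  · intro v hv
    simp only [Finset.mem_Ico] at hv
    exact ⟨⟨v, hv.2⟩, by simp only [Finset.mem_filter]; exact ⟨Finset.mem_univ _, by simpa using hv.1⟩, rfl⟩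

lemma decompA {a b : ℕ} (π : Equiv.Perm (Fin (a + b + 1)))
    (hav : AvoidsNonconsec132 π) (hP : P π = a) (hQ : ¬ Q π) :
    ∃ (α : Equiv.Perm (Fin a)) (β : Equiv.Perm (Fin b)),
      AvoidsNonconsec132 α ∧ AvoidsNonconsec132 β ∧ glueA α β = π := by
  have hmax : π ⟨a, by omega⟩ = Fin.last (a + b) := by
    have h := apply_P π
    rw [← h]
    congr 1
    exact Fin.ext (by simp [hP])
  have hmax_iff : ∀ i : Fin (a + b + 1), π i = Fin.last (a + b) ↔ (i : ℕ) = a := by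
    intro i
    constructor
    · intro h; have := P_eq_of_apply π h; omega
    · intro h; have : i = ⟨a, by omega⟩ := Fin.ext h; rw [this]; exact hmax
  have hne : ∀ i : Fin (a + b + 1), (i : ℕ) ≠ a → (π i : ℕ) < a + b := by
    intro i h
    have h1 := (π i).isLt
    rcases Nat.lt_or_ge (π i : ℕ) (a + b) with h2 | h2
    · exact h2
    · exfalso
      have : π i = Fin.last (a + b) := Fin.ext (by simp [Fin.last]; omega)
      exact h ((hmax_iff i).1 this)
  have cross : ∀ i k : Fin (a + b + 1), (i : ℕ) < a → a < (k : ℕ) → π k < π i := by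
    intro i k hi hk
    by_contra hc
    push_neg at hc
    have hik : π i < π k := by
      rcases Nat.lt_or_ge (π i : ℕ) (π k : ℕ) with h | h
      · exact Fin.lt_def.mpr h
      · have : π i = π k := Fin.ext (le_antisymm (Fin.le_def.mp hc) h)
        have := π.injective this
        exact absurd (congrArg Fin.val this) (by omega)
    have hkm : π k < π ⟨a, by omega⟩ := by
      rw [hmax]
      exact Fin.lt_def.mpr (by simpa [Fin.last] using hne k (by omega))
    have hcc := hav i ⟨a, by omega⟩ k (Fin.lt_def.mpr (by simpa using hi))
      (Fin.lt_def.mpr (by simpa using hk)) hik hkm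
    simp only [Fin.val_mk] at hcc
    apply hQ
    refine ⟨by omega, by omega, ?_⟩
    have key : ∀ u v : Fin (a + b + 1), u = i → v = k → π u < π v := by
      rintro u v rfl rfl; exact hik
    exact key _ _ (Fin.ext (by simp [hP]; omega)) (Fin.ext (by simp [hP]; omega))
  -- segment analysis
  set T := (Finset.univ : Finset (Fin (a + b + 1))).filter (fun x : Fin (a + b + 1) => a < (x : ℕ)) with hT
  have hTcard : T.card = b := by rw [hT, card_filter_gt]; omega
  have hTmem : ∀ x : Fin (a + b + 1), x ∈ T ↔ a < (x : ℕ) := by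
    intro x; simp [hT]
  have hseg : ∀ x ∈ T, ∀ y, y ∉ T → π x < π y := by
    intro x hx y hy
    rw [hTmem] at hx
    rw [hTmem] at hy
    push_neg at hy
    rcases Nat.eq_or_lt_of_le hy with h | h
    · have hyx : π y = Fin.last (a + b) := (hmax_iff y).2 h
      rw [hyx]
      exact Fin.lt_def.mpr (by simpa [Fin.last] using hne x (by omega))
    · exact cross y x h hx
  have hlow : ∀ x : Fin (a + b + 1), a < (x : ℕ) → (π x : ℕ) < b := by
    intro x h
    have := low_val π T hseg ((hTmem x).2 h)
    rwa [hTcard] at this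
  have hhigh : ∀ x : Fin (a + b + 1), (x : ℕ) ≤ a → b ≤ (π x : ℕ) := by
    intro x h
    have := high_val π T hseg (y := x) (by intro hc; rw [hTmem] at hc; omega)
    rwa [hTcard] at this
  -- build α
  have hαb : ∀ x : Fin a, (π ⟨(x : ℕ), by omega⟩ : ℕ) - b < a := by
    intro x
    have h1 := hhigh ⟨(x : ℕ), by omega⟩ (by simpa using le_of_lt x.isLt)
    have h2 := hne ⟨(x : ℕ), by omega⟩ (by simp; omega)
    omega
  let αf : Fin a → Fin a := fun x => ⟨(π ⟨(x : ℕ), by omega⟩ : ℕ) - b, hαb x⟩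
  have hαinj : Function.Injective αf := by
    intro x y h
    have h' := congrArg Fin.val h
    simp only [αf] at h'
    have hx := hhigh ⟨(x : ℕ), by omega⟩ (by simpa using le_of_lt x.isLt)
    have hy := hhigh ⟨(y : ℕ), by omega⟩ (by simpa using le_of_lt y.isLt)
    have : π ⟨(x : ℕ), by omega⟩ = π ⟨(y : ℕ), by omega⟩ := Fin.ext (by omega)
    have := congrArg Fin.val (π.injective this)
    exact Fin.ext (by simpa using this)
  let α : Equiv.Perm (Fin a) := Equiv.ofBijective αf (Finite.injective_iff_bijective.1 hαinj)
  -- build β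
  let βf : Fin b → Fin b := fun y =>
    ⟨(π ⟨a + 1 + (y : ℕ), by have := y.isLt; omega⟩ : ℕ),
      hlow ⟨a + 1 + (y : ℕ), by have := y.isLt; omega⟩ (by show a < a + 1 + (y : ℕ); omega)⟩
  have hβinj : Function.Injective βf := by
    intro x y h
    have h' := congrArg Fin.val h
    simp only [βf] at h'
    have : π ⟨a + 1 + (x : ℕ), by have := x.isLt; omega⟩
        = π ⟨a + 1 + (y : ℕ), by have := y.isLt; omega⟩ := Fin.ext h'
    have := congrArg Fin.val (π.injective this)
    exact Fin.ext (by simpa using this)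
  let β : Equiv.Perm (Fin b) := Equiv.ofBijective βf (Finite.injective_iff_bijective.1 hβinj)
  refine ⟨α, β, ?_, ?_, ?_⟩
  · -- α avoids
    intro i j k hij hjk h1 h2
    rw [Fin.lt_def] at hij hjk
    have h1' : (αf i : ℕ) < (αf k : ℕ) := h1
    have h2' : (αf k : ℕ) < (αf j : ℕ) := h2
    simp only [αf] at h1' h2'
    have hbi := hhigh ⟨(i : ℕ), by omega⟩ (by simpa using le_of_lt i.isLt)
    have hbj := hhigh ⟨(j : ℕ), by omega⟩ (by simpa using le_of_lt j.isLt)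
    have hbk := hhigh ⟨(k : ℕ), by omega⟩ (by simpa using le_of_lt k.isLt)
    have hc := hav ⟨(i : ℕ), by omega⟩ ⟨(j : ℕ), by omega⟩ ⟨(k : ℕ), by omega⟩
      (Fin.mk_lt_mk.mpr hij) (Fin.mk_lt_mk.mpr hjk)
      (Fin.lt_def.mpr (by omega)) (Fin.lt_def.mpr (by omega))
    simpa using hc
  · -- β avoids
    intro i j k hij hjk h1 h2
    rw [Fin.lt_def] at hij hjk
    have h1' : (βf i : ℕ) < (βf k : ℕ) := h1
    have h2' : (βf k : ℕ) < (βf j : ℕ) := h2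
    simp only [βf] at h1' h2'
    have hc := hav ⟨a + 1 + (i : ℕ), by have := i.isLt; omega⟩
      ⟨a + 1 + (j : ℕ), by have := j.isLt; omega⟩
      ⟨a + 1 + (k : ℕ), by have := k.isLt; omega⟩
      (Fin.mk_lt_mk.mpr (by omega)) (Fin.mk_lt_mk.mpr (by omega))
      (Fin.lt_def.mpr (by omega)) (Fin.lt_def.mpr (by omega))
    simp only [Fin.val_mk] at hc
    omega
  · -- glueA α β = π
    apply Equiv.ext
    intro i
    apply Fin.ext
    show (glueFunA α β i : ℕ) = (π i : ℕ)
    rcases lt_trichotomy (i : ℕ) a with h | h | h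
    · rw [glueFunA_lt α β h]
      have : (α ⟨(i : ℕ), h⟩ : ℕ) = (π ⟨(i : ℕ), by omega⟩ : ℕ) - b := rfl
      rw [this]
      have hbi := hhigh ⟨(i : ℕ), by omega⟩ (by show (i : ℕ) ≤ a; omega)
      have hv : (π ⟨(i : ℕ), by omega⟩ : ℕ) = (π i : ℕ) :=
        congrArg Fin.val (congrArg π (Fin.ext rfl))
      omega
    · rw [glueFunA_eq α β h]
      have : π i = Fin.last (a + b) := (hmax_iff i).2 h
      rw [this]
      rfl
    · have hb : (i : ℕ) - (a + 1) < b := by have := i.isLt; omega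
      rw [glueFunA_gt α β h hb]
      have : (β ⟨(i : ℕ) - (a + 1), hb⟩ : ℕ)
          = (π ⟨a + 1 + ((i : ℕ) - (a + 1)), by have := i.isLt; omega⟩ : ℕ) := rfl
      rw [this]
      have key : ∀ u : Fin (a + b + 1), u = i → (π u : ℕ) = (π i : ℕ) := by
        rintro u rfl; rfl
      exact key _ (Fin.ext (by simp; omega))


lemma decompB {a b : ℕ} (π : Equiv.Perm (Fin (a + b + 3)))
    (hav : AvoidsNonconsec132 π) (hP : P π = a + 1) (hQ : Q π) :
    ∃ (α : Equiv.Perm (Fin a)) (β : Equiv.Perm (Fin b)),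
      AvoidsNonconsec132 α ∧ AvoidsNonconsec132 β ∧ glueB α β = π := by
  have hmax : π ⟨a + 1, by omega⟩ = Fin.last (a + b + 2) := by
    have h := apply_P π
    rw [← h]
    congr 1
    exact Fin.ext (by simp [hP])
  have hmax_iff : ∀ i : Fin (a + b + 3), π i = Fin.last (a + b + 2) ↔ (i : ℕ) = a + 1 := by
    intro i
    constructor
    · intro h; have := P_eq_of_apply π h; omega
    · intro h; have : i = ⟨a + 1, by omega⟩ := Fin.ext h; rw [this]; exact hmax
  have hne : ∀ i : Fin (a + b + 3), (i : ℕ) ≠ a + 1 → (π i : ℕ) < a + b + 2 := by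
    intro i h
    have h1 := (π i).isLt
    rcases Nat.lt_or_ge (π i : ℕ) (a + b + 2) with h2 | h2
    · exact h2
    · exfalso
      have : π i = Fin.last (a + b + 2) := Fin.ext (by simp [Fin.last]; omega)
      exact h ((hmax_iff i).1 this)
  obtain ⟨hq1, hq2, hqlt⟩ := hQ
  have hab : ∀ (pa : a < a + b + 3) (pc : a + 2 < a + b + 3),
      π ⟨a, pa⟩ < π ⟨a + 2, pc⟩ := by
    intro pa pc
    have h1 : (⟨a, pa⟩ : Fin (a + b + 3)) = ⟨P π - 1, by omega⟩ := Fin.ext (by simp [hP])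
    have h2 : (⟨a + 2, pc⟩ : Fin (a + b + 3)) = ⟨P π + 1, hq2⟩ := Fin.ext (by simp [hP])
    rw [h1, h2]
    exact hqlt
  have cross : ∀ i k : Fin (a + b + 3), (i : ℕ) < a + 1 → a + 1 < (k : ℕ) →
      ¬((i : ℕ) = a ∧ (k : ℕ) = a + 2) → π k < π i := by
    intro i k hi hk hnc
    by_contra hc
    push_neg at hc
    have hik : π i < π k := by
      rcases Nat.lt_or_ge (π i : ℕ) (π k : ℕ) with h | h
      · exact Fin.lt_def.mpr h
      · have : π i = π k := Fin.ext (le_antisymm (Fin.le_def.mp hc) h)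
        have := π.injective this
        exact absurd (congrArg Fin.val this) (by omega)
    have hkm : π k < π ⟨a + 1, by omega⟩ := by
      rw [hmax]
      exact Fin.lt_def.mpr (by simpa [Fin.last] using hne k (by omega))
    have hcc := hav i ⟨a + 1, by omega⟩ k (Fin.lt_def.mpr (by simpa using hi))
      (Fin.lt_def.mpr (by simpa using hk)) hik hkm
    simp only [Fin.val_mk] at hcc
    exact hnc ⟨by omega, by omega⟩
  -- segment analysis for the tail β
  set T := (Finset.univ : Finset (Fin (a + b + 3))).filter
    (fun x : Fin (a + b + 3) => a + 2 < (x : ℕ)) with hT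
  have hTcard : T.card = b := by rw [hT, card_filter_gt]; omega
  have hTmem : ∀ x : Fin (a + b + 3), x ∈ T ↔ a + 2 < (x : ℕ) := by
    intro x; simp [hT]
  have hseg : ∀ x ∈ T, ∀ y, y ∉ T → π x < π y := by
    intro x hx y hy
    rw [hTmem] at hx
    rw [hTmem] at hy
    push_neg at hy
    have hxa : π x < π ⟨a, by omega⟩ :=
      cross ⟨a, by omega⟩ x (by show a < a + 1; omega) (by show a + 1 < (x : ℕ); omega)
        (by show ¬(a = a ∧ (x : ℕ) = a + 2); omega)
    rcases Nat.lt_or_ge (y : ℕ) (a + 1) with h | h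
    · rcases Nat.eq_or_lt_of_le (Nat.lt_succ_iff.mp h) with h' | h'
      · -- y = a
        have : y = (⟨a, by omega⟩ : Fin (a + b + 3)) := Fin.ext h'
        rw [this]; exact hxa
      · exact cross y x (by omega) (by omega) (by omega)
    · rcases Nat.eq_or_lt_of_le h with h' | h'
      · -- y = a + 1 : max
        have : y = (⟨a + 1, by omega⟩ : Fin (a + b + 3)) := Fin.ext h'.symm
        rw [this, hmax]
        exact Fin.lt_def.mpr (by simpa [Fin.last] using hne x (by omega))
      · -- y = a + 2
        have : y = (⟨a + 2, by omega⟩ : Fin (a + b + 3)) :=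
          Fin.ext (by show (y : ℕ) = a + 2; omega)
        rw [this]
        exact lt_trans hxa (hab _ _)
  have hlow : ∀ x : Fin (a + b + 3), a + 2 < (x : ℕ) → (π x : ℕ) < b := by
    intro x h
    have := low_val π T hseg ((hTmem x).2 h)
    rwa [hTcard] at this
  have hhigh : ∀ x : Fin (a + b + 3), (x : ℕ) ≤ a + 2 → b ≤ (π x : ℕ) := by
    intro x h
    have := high_val π T hseg (y := x) (by intro hc; rw [hTmem] at hc; omega)
    rwa [hTcard] at this
  -- pin down π at a
  obtain ⟨T2, hT2mem, hT2card⟩ :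
      ∃ U : Finset (Fin (a + b + 3)),
        (∀ x : Fin (a + b + 3), x ∈ U ↔ ((x : ℕ) = a ∨ a + 2 < (x : ℕ))) ∧
        U.card = b + 1 := by
    refine ⟨insert (⟨a, by omega⟩ : Fin (a + b + 3)) T, ?_, ?_⟩
    · intro x
      rw [Finset.mem_insert, hTmem]
      constructor
      · rintro (rfl | h)
        · exact Or.inl rfl
        · exact Or.inr h
      · rintro (h | h)
        · exact Or.inl (Fin.ext h)
        · exact Or.inr h
    · rw [Finset.card_insert_of_notMem (by rw [hTmem]; show ¬ (a + 2 < a); omega), hTcard]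
  have hseg2 : ∀ x ∈ T2, ∀ y, y ∉ T2 → π x < π y := by
    intro x hx y hy
    rw [hT2mem] at hx
    rw [hT2mem] at hy
    push_neg at hy
    obtain ⟨hy1, hy2⟩ := hy
    rcases hx with hx | hx
    · -- x = a
      have hxe : x = (⟨a, by omega⟩ : Fin (a + b + 3)) := Fin.ext hx
      rcases Nat.lt_or_ge (y : ℕ) a with h | h
      · -- y < a : π x < π ⟨a+2⟩ < π y
        have h1 : π ⟨a + 2, by omega⟩ < π y :=
          cross y ⟨a + 2, by omega⟩ (by omega) (by show a + 1 < a + 2; omega)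
            (by show ¬((y : ℕ) = a ∧ a + 2 = a + 2); omega)
        rw [hxe]
        exact lt_trans (hab _ _) h1
      · rcases Nat.eq_or_lt_of_le h with h' | h'
        · omega
        · have hy3 : (y : ℕ) = a + 1 ∨ (y : ℕ) = a + 2 := by omega
          rcases hy3 with h3 | h3
          · have : y = (⟨a + 1, by omega⟩ : Fin (a + b + 3)) := Fin.ext h3
            rw [this, hmax]
            exact Fin.lt_def.mpr (by simpa [Fin.last] using hne x (by omega))
          · have : y = (⟨a + 2, by omega⟩ : Fin (a + b + 3)) := Fin.ext h3
            rw [this, hxe]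
            exact hab _ _
    · exact hseg x ((hTmem x).2 hx) y (by rw [hTmem]; omega)
  have hA : (π ⟨a, by omega⟩ : ℕ) = b := by
    have h1 := low_val π T2 hseg2 ((hT2mem ⟨a, by omega⟩).2 (Or.inl rfl))
    have h2 := hhigh ⟨a, by omega⟩ (by show a ≤ a + 2; omega)
    omega
  -- pin down π at a+2
  obtain ⟨T3, hT3mem, hT3card⟩ :
      ∃ U : Finset (Fin (a + b + 3)),
        (∀ x : Fin (a + b + 3),
          x ∈ U ↔ ((x : ℕ) = a + 2 ∨ (x : ℕ) = a ∨ a + 2 < (x : ℕ))) ∧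
        U.card = b + 2 := by
    refine ⟨insert (⟨a + 2, by omega⟩ : Fin (a + b + 3)) T2, ?_, ?_⟩
    · intro x
      constructor
      · intro hx
        rcases Finset.mem_insert.1 hx with rfl | h
        · exact Or.inl rfl
        · exact Or.inr ((hT2mem x).1 h)
      · rintro (h | h)
        · exact Finset.mem_insert.2 (Or.inl (Fin.ext h))
        · exact Finset.mem_insert.2 (Or.inr ((hT2mem x).2 h))
    · rw [Finset.card_insert_of_notMem
        (by rw [hT2mem]; show ¬ (a + 2 = a ∨ a + 2 < a + 2); omega), hT2card]
  have hseg3 : ∀ x ∈ T3, ∀ y, y ∉ T3 → π x < π y := by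
    intro x hx y hy
    rw [hT3mem] at hx
    rw [hT3mem] at hy
    push_neg at hy
    obtain ⟨hy1, hy2, hy3⟩ := hy
    rcases hx with hx | hx
    · -- x = a + 2
      have hxe : x = (⟨a + 2, by omega⟩ : Fin (a + b + 3)) := Fin.ext hx
      rcases Nat.lt_or_ge (y : ℕ) (a + 1) with h | h
      · -- y < a (y ≠ a)
        rw [hxe]
        exact cross y ⟨a + 2, by omega⟩ (by omega) (by show a + 1 < a + 2; omega)
          (by show ¬((y : ℕ) = a ∧ a + 2 = a + 2); omega)
      · -- y = a + 1 : max
        have hy4 : (y : ℕ) = a + 1 := by have := y.isLt; omega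
        have : y = (⟨a + 1, by omega⟩ : Fin (a + b + 3)) := Fin.ext hy4
        rw [this, hmax]
        exact Fin.lt_def.mpr (by simpa [Fin.last] using hne x (by omega))
    · exact hseg2 x ((hT2mem x).2 hx) y (by rw [hT2mem]; omega)
  have hC : (π ⟨a + 2, by omega⟩ : ℕ) = b + 1 := by
    have h1 := low_val π T3 hseg3 ((hT3mem ⟨a + 2, by omega⟩).2 (Or.inl rfl))
    have h2 := high_val π T2 hseg2 (y := ⟨a + 2, by omega⟩)
      (by rw [hT2mem]; show ¬ (a + 2 = a ∨ a + 2 < a + 2); omega)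
    omega
  have hαlow : ∀ x : Fin (a + b + 3), (x : ℕ) < a → b + 2 ≤ (π x : ℕ) := by
    intro x h
    have := high_val π T3 hseg3 (y := x) (by rw [hT3mem]; omega)
    rwa [hT3card] at this
  -- build α and β
  have hαb : ∀ x : Fin a, (π ⟨(x : ℕ), by omega⟩ : ℕ) - (b + 2) < a := by
    intro x
    have h1 := hαlow ⟨(x : ℕ), by omega⟩ (by show (x : ℕ) < a; exact x.isLt)
    have h2 := hne ⟨(x : ℕ), by omega⟩ (by show (x : ℕ) ≠ a + 1; have := x.isLt; omega)
    omega
  let αf : Fin a → Fin a := fun x => ⟨(π ⟨(x : ℕ), by omega⟩ : ℕ) - (b + 2), hαb x⟩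
  have hαinj : Function.Injective αf := by
    intro x y h
    have h' := congrArg Fin.val h
    simp only [αf] at h'
    have hx := hαlow ⟨(x : ℕ), by omega⟩ (by show (x : ℕ) < a; exact x.isLt)
    have hy := hαlow ⟨(y : ℕ), by omega⟩ (by show (y : ℕ) < a; exact y.isLt)
    have : π ⟨(x : ℕ), by omega⟩ = π ⟨(y : ℕ), by omega⟩ := Fin.ext (by omega)
    have := congrArg Fin.val (π.injective this)
    exact Fin.ext (by simpa using this)
  let α : Equiv.Perm (Fin a) := Equiv.ofBijective αf (Finite.injective_iff_bijective.1 hαinj)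
  let βf : Fin b → Fin b := fun y =>
    ⟨(π ⟨a + 3 + (y : ℕ), by have := y.isLt; omega⟩ : ℕ),
      hlow ⟨a + 3 + (y : ℕ), by have := y.isLt; omega⟩ (by show a + 2 < a + 3 + (y : ℕ); omega)⟩
  have hβinj : Function.Injective βf := by
    intro x y h
    have h' := congrArg Fin.val h
    simp only [βf] at h'
    have : π ⟨a + 3 + (x : ℕ), by have := x.isLt; omega⟩
        = π ⟨a + 3 + (y : ℕ), by have := y.isLt; omega⟩ := Fin.ext h'
    have := congrArg Fin.val (π.injective this)
    exact Fin.ext (by simpa using this)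
  let β : Equiv.Perm (Fin b) := Equiv.ofBijective βf (Finite.injective_iff_bijective.1 hβinj)
  refine ⟨α, β, ?_, ?_, ?_⟩
  · -- α avoids
    intro i j k hij hjk h1 h2
    rw [Fin.lt_def] at hij hjk
    have h1' : (αf i : ℕ) < (αf k : ℕ) := h1
    have h2' : (αf k : ℕ) < (αf j : ℕ) := h2
    simp only [αf] at h1' h2'
    have hbi := hαlow ⟨(i : ℕ), by omega⟩ (by show (i : ℕ) < a; exact i.isLt)
    have hbj := hαlow ⟨(j : ℕ), by omega⟩ (by show (j : ℕ) < a; exact j.isLt)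
    have hbk := hαlow ⟨(k : ℕ), by omega⟩ (by show (k : ℕ) < a; exact k.isLt)
    have hc := hav ⟨(i : ℕ), by omega⟩ ⟨(j : ℕ), by omega⟩ ⟨(k : ℕ), by omega⟩
      (Fin.mk_lt_mk.mpr hij) (Fin.mk_lt_mk.mpr hjk)
      (Fin.lt_def.mpr (by omega)) (Fin.lt_def.mpr (by omega))
    simpa using hc
  · -- β avoids
    intro i j k hij hjk h1 h2
    rw [Fin.lt_def] at hij hjk
    have h1' : (βf i : ℕ) < (βf k : ℕ) := h1
    have h2' : (βf k : ℕ) < (βf j : ℕ) := h2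
    simp only [βf] at h1' h2'
    have hc := hav ⟨a + 3 + (i : ℕ), by have := i.isLt; omega⟩
      ⟨a + 3 + (j : ℕ), by have := j.isLt; omega⟩
      ⟨a + 3 + (k : ℕ), by have := k.isLt; omega⟩
      (Fin.mk_lt_mk.mpr (by omega)) (Fin.mk_lt_mk.mpr (by omega))
      (Fin.lt_def.mpr (by omega)) (Fin.lt_def.mpr (by omega))
    simp only [Fin.val_mk] at hc
    omega
  · -- glueB α β = π
    apply Equiv.ext
    intro i
    apply Fin.ext
    show (glueFunB α β i : ℕ) = (π i : ℕ)
    have hkey : ∀ (v : ℕ) (hv : v < a + b + 3), (i : ℕ) = v → (π ⟨v, hv⟩ : ℕ) = (π i : ℕ) := by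
      intro v hv h
      have : (⟨v, hv⟩ : Fin (a + b + 3)) = i := Fin.ext h.symm
      rw [this]
    have hi := i.isLt
    rcases Nat.lt_or_ge (i : ℕ) a with h | h
    · rw [glueFunB_lt α β h]
      have : (α ⟨(i : ℕ), h⟩ : ℕ) = (π ⟨(i : ℕ), by omega⟩ : ℕ) - (b + 2) := rfl
      rw [this]
      have hbi := hαlow ⟨(i : ℕ), by omega⟩ (by show (i : ℕ) < a; omega)
      have hv := hkey (i : ℕ) (by omega) rfl
      omega
    · rcases Nat.eq_or_lt_of_le h with h' | h'
      · rw [glueFunB_eq0 α β h'.symm]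
        have hv := hkey a (by omega) h'.symm
        omega
      · rcases Nat.eq_or_lt_of_le (show a + 1 ≤ (i : ℕ) by omega) with h2 | h2
        · rw [glueFunB_eq1 α β h2.symm]
          have : π i = Fin.last (a + b + 2) := (hmax_iff i).2 h2.symm
          rw [this]
          rfl
        · rcases Nat.eq_or_lt_of_le (show a + 2 ≤ (i : ℕ) by omega) with h3 | h3
          · rw [glueFunB_eq2 α β h3.symm]
            have hv := hkey (a + 2) (by omega) h3.symm
            omega
          · have hb : (i : ℕ) - (a + 3) < b := by omega
            rw [glueFunB_gt α β h3 hb]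
            have : (β ⟨(i : ℕ) - (a + 3), hb⟩ : ℕ)
                = (π ⟨a + 3 + ((i : ℕ) - (a + 3)), by omega⟩ : ℕ) := rfl
            rw [this]
            have hv := hkey (a + 3 + ((i : ℕ) - (a + 3))) (by omega) (by omega)
            omega

lemma glueA_inj_pair {a b : ℕ} {α α' : Equiv.Perm (Fin a)} {β β' : Equiv.Perm (Fin b)}
    (h : glueA α β = glueA α' β') : α = α' ∧ β = β' := by
  constructor
  · apply Equiv.ext; intro x; apply Fin.ext
    have hx : (x : ℕ) < a := x.isLt
    have h1 : (glueA α β ⟨(x : ℕ), by omega⟩ : ℕ)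
        = (glueA α' β' ⟨(x : ℕ), by omega⟩ : ℕ) := by rw [h]
    have e1 : (glueFunA α β ⟨(x : ℕ), by omega⟩ : ℕ) = b + α ⟨(x : ℕ), hx⟩ :=
      glueFunA_lt α β hx
    have e2 : (glueFunA α' β' ⟨(x : ℕ), by omega⟩ : ℕ) = b + α' ⟨(x : ℕ), hx⟩ :=
      glueFunA_lt α' β' hx
    have hxx : (⟨(x : ℕ), hx⟩ : Fin a) = x := Fin.ext rfl
    have q1 : (α x : ℕ) = (α ⟨(x : ℕ), hx⟩ : ℕ) := congrArg (fun t => ((α t : Fin a) : ℕ)) hxx.symm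
    have q2 : (α' x : ℕ) = (α' ⟨(x : ℕ), hx⟩ : ℕ) := congrArg (fun t => ((α' t : Fin a) : ℕ)) hxx.symm
    have g1 : (glueA α β ⟨(x : ℕ), by omega⟩ : ℕ)
        = (glueFunA α β ⟨(x : ℕ), by omega⟩ : ℕ) := rfl
    have g2 : (glueA α' β' ⟨(x : ℕ), by omega⟩ : ℕ)
        = (glueFunA α' β' ⟨(x : ℕ), by omega⟩ : ℕ) := rfl
    omega
  · apply Equiv.ext; intro y; apply Fin.ext
    have hy : a + 1 + (y : ℕ) < a + b + 1 := by have := y.isLt; omega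
    have hgt : a < ((⟨a + 1 + (y : ℕ), hy⟩ : Fin (a + b + 1)) : ℕ) := by
      show a < a + 1 + (y : ℕ); omega
    have hb : ((⟨a + 1 + (y : ℕ), hy⟩ : Fin (a + b + 1)) : ℕ) - (a + 1) < b := by
      show a + 1 + (y : ℕ) - (a + 1) < b; have := y.isLt; omega
    have h1 : (glueA α β ⟨a + 1 + (y : ℕ), hy⟩ : ℕ)
        = (glueA α' β' ⟨a + 1 + (y : ℕ), hy⟩ : ℕ) := by rw [h]
    have e1 := glueFunA_gt α β hgt hb
    have e2 := glueFunA_gt α' β' hgt hb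
    have hyy : (⟨((⟨a + 1 + (y : ℕ), hy⟩ : Fin (a + b + 1)) : ℕ) - (a + 1), hb⟩ : Fin b) = y :=
      Fin.ext (by show a + 1 + (y : ℕ) - (a + 1) = (y : ℕ); omega)
    have q1 : (β y : ℕ) = (β ⟨((⟨a + 1 + (y : ℕ), hy⟩ : Fin (a + b + 1)) : ℕ) - (a + 1), hb⟩ : ℕ) :=
      congrArg (fun t => ((β t : Fin b) : ℕ)) hyy.symm
    have q2 : (β' y : ℕ) = (β' ⟨((⟨a + 1 + (y : ℕ), hy⟩ : Fin (a + b + 1)) : ℕ) - (a + 1), hb⟩ : ℕ) :=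
      congrArg (fun t => ((β' t : Fin b) : ℕ)) hyy.symm
    have g1 : (glueA α β ⟨a + 1 + (y : ℕ), hy⟩ : ℕ)
        = (glueFunA α β ⟨a + 1 + (y : ℕ), hy⟩ : ℕ) := rfl
    have g2 : (glueA α' β' ⟨a + 1 + (y : ℕ), hy⟩ : ℕ)
        = (glueFunA α' β' ⟨a + 1 + (y : ℕ), hy⟩ : ℕ) := rfl
    omega

lemma glueB_inj_pair {a b : ℕ} {α α' : Equiv.Perm (Fin a)} {β β' : Equiv.Perm (Fin b)}
    (h : glueB α β = glueB α' β') : α = α' ∧ β = β' := by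
  constructor
  · apply Equiv.ext; intro x; apply Fin.ext
    have hx : (x : ℕ) < a := x.isLt
    have h1 : (glueB α β ⟨(x : ℕ), by omega⟩ : ℕ)
        = (glueB α' β' ⟨(x : ℕ), by omega⟩ : ℕ) := by rw [h]
    have e1 : (glueFunB α β ⟨(x : ℕ), by omega⟩ : ℕ) = b + 2 + α ⟨(x : ℕ), hx⟩ :=
      glueFunB_lt α β hx
    have e2 : (glueFunB α' β' ⟨(x : ℕ), by omega⟩ : ℕ) = b + 2 + α' ⟨(x : ℕ), hx⟩ :=
      glueFunB_lt α' β' hx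
    have hxx : (⟨(x : ℕ), hx⟩ : Fin a) = x := Fin.ext rfl
    have q1 : (α x : ℕ) = (α ⟨(x : ℕ), hx⟩ : ℕ) := congrArg (fun t => ((α t : Fin a) : ℕ)) hxx.symm
    have q2 : (α' x : ℕ) = (α' ⟨(x : ℕ), hx⟩ : ℕ) := congrArg (fun t => ((α' t : Fin a) : ℕ)) hxx.symm
    have g1 : (glueB α β ⟨(x : ℕ), by omega⟩ : ℕ)
        = (glueFunB α β ⟨(x : ℕ), by omega⟩ : ℕ) := rfl
    have g2 : (glueB α' β' ⟨(x : ℕ), by omega⟩ : ℕ)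
        = (glueFunB α' β' ⟨(x : ℕ), by omega⟩ : ℕ) := rfl
    omega
  · apply Equiv.ext; intro y; apply Fin.ext
    have hy : a + 3 + (y : ℕ) < a + b + 3 := by have := y.isLt; omega
    have hgt : a + 2 < ((⟨a + 3 + (y : ℕ), hy⟩ : Fin (a + b + 3)) : ℕ) := by
      show a + 2 < a + 3 + (y : ℕ); omega
    have hb : ((⟨a + 3 + (y : ℕ), hy⟩ : Fin (a + b + 3)) : ℕ) - (a + 3) < b := by
      show a + 3 + (y : ℕ) - (a + 3) < b; have := y.isLt; omega
    have h1 : (glueB α β ⟨a + 3 + (y : ℕ), hy⟩ : ℕ)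
        = (glueB α' β' ⟨a + 3 + (y : ℕ), hy⟩ : ℕ) := by rw [h]
    have e1 := glueFunB_gt α β hgt hb
    have e2 := glueFunB_gt α' β' hgt hb
    have hyy : (⟨((⟨a + 3 + (y : ℕ), hy⟩ : Fin (a + b + 3)) : ℕ) - (a + 3), hb⟩ : Fin b) = y :=
      Fin.ext (by show a + 3 + (y : ℕ) - (a + 3) = (y : ℕ); omega)
    have q1 : (β y : ℕ) = (β ⟨((⟨a + 3 + (y : ℕ), hy⟩ : Fin (a + b + 3)) : ℕ) - (a + 3), hb⟩ : ℕ) :=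
      congrArg (fun t => ((β t : Fin b) : ℕ)) hyy.symm
    have q2 : (β' y : ℕ) = (β' ⟨((⟨a + 3 + (y : ℕ), hy⟩ : Fin (a + b + 3)) : ℕ) - (a + 3), hb⟩ : ℕ) :=
      congrArg (fun t => ((β' t : Fin b) : ℕ)) hyy.symm
    have g1 : (glueB α β ⟨a + 3 + (y : ℕ), hy⟩ : ℕ)
        = (glueFunB α β ⟨a + 3 + (y : ℕ), hy⟩ : ℕ) := rfl
    have g2 : (glueB α' β' ⟨a + 3 + (y : ℕ), hy⟩ : ℕ)
        = (glueFunB α' β' ⟨a + 3 + (y : ℕ), hy⟩ : ℕ) := rfl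
    omega

lemma cardA (a b : ℕ) :
    ((Finset.univ : Finset (Equiv.Perm (Fin (a + b + 1)))).filter
      (fun π => AvoidsNonconsec132 π ∧ P π = a ∧ ¬ Q π)).card = e a * e b := by
  classical
  set s := (Finset.univ : Finset (Equiv.Perm (Fin (a + b + 1)))).filter
      (fun π => AvoidsNonconsec132 π ∧ P π = a ∧ ¬ Q π) with hs
  have h1 : e a * e b
      = Nat.card ({α : Equiv.Perm (Fin a) // AvoidsNonconsec132 α}
          × {β : Equiv.Perm (Fin b) // AvoidsNonconsec132 β}) := by
    rw [Nat.card_prod]; rfl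
  have h2 : (s.card : ℕ) = Nat.card {π : Equiv.Perm (Fin (a + b + 1)) // π ∈ s} := by
    rw [Nat.card_eq_fintype_card]
    exact (Fintype.card_coe s).symm
  rw [h1, h2]
  refine (Nat.card_eq_of_bijective
    (fun p : ({α : Equiv.Perm (Fin a) // AvoidsNonconsec132 α}
        × {β : Equiv.Perm (Fin b) // AvoidsNonconsec132 β}) =>
      (⟨glueA p.1.1 p.2.1, by
        rw [hs, Finset.mem_filter]
        exact ⟨Finset.mem_univ _,
          glueA_avoids _ _ p.1.2 p.2.2, glueA_P _ _, glueA_notQ _ _⟩⟩ :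
        {π : Equiv.Perm (Fin (a + b + 1)) // π ∈ s})) ⟨?_, ?_⟩).symm
  · rintro ⟨⟨α, hα⟩, ⟨β, hβ⟩⟩ ⟨⟨α', hα'⟩, ⟨β', hβ'⟩⟩ hpq
    have h := glueA_inj_pair (Subtype.ext_iff.1 hpq)
    simp only [Prod.mk.injEq, Subtype.mk.injEq]
    exact ⟨h.1, h.2⟩
  · rintro ⟨π, hπ⟩
    rw [hs, Finset.mem_filter] at hπ
    obtain ⟨_, hav, hP, hQ⟩ := hπ
    obtain ⟨α, β, hα, hβ, heq⟩ := decompA π hav hP hQ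
    exact ⟨⟨⟨α, hα⟩, ⟨β, hβ⟩⟩, Subtype.ext heq⟩

lemma cardB (a b : ℕ) :
    ((Finset.univ : Finset (Equiv.Perm (Fin (a + b + 3)))).filter
      (fun π => AvoidsNonconsec132 π ∧ P π = a + 1 ∧ Q π)).card = e a * e b := by
  classical
  set s := (Finset.univ : Finset (Equiv.Perm (Fin (a + b + 3)))).filter
      (fun π => AvoidsNonconsec132 π ∧ P π = a + 1 ∧ Q π) with hs
  have h1 : e a * e b
      = Nat.card ({α : Equiv.Perm (Fin a) // AvoidsNonconsec132 α}
          × {β : Equiv.Perm (Fin b) // AvoidsNonconsec132 β}) := by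
    rw [Nat.card_prod]; rfl
  have h2 : (s.card : ℕ) = Nat.card {π : Equiv.Perm (Fin (a + b + 3)) // π ∈ s} := by
    rw [Nat.card_eq_fintype_card]
    exact (Fintype.card_coe s).symm
  rw [h1, h2]
  refine (Nat.card_eq_of_bijective
    (fun p : ({α : Equiv.Perm (Fin a) // AvoidsNonconsec132 α}
        × {β : Equiv.Perm (Fin b) // AvoidsNonconsec132 β}) =>
      (⟨glueB p.1.1 p.2.1, by
        rw [hs, Finset.mem_filter]
        exact ⟨Finset.mem_univ _,
          glueB_avoids _ _ p.1.2 p.2.2, glueB_P _ _, glueB_Q _ _⟩⟩ :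
        {π : Equiv.Perm (Fin (a + b + 3)) // π ∈ s})) ⟨?_, ?_⟩).symm
  · rintro ⟨⟨α, hα⟩, ⟨β, hβ⟩⟩ ⟨⟨α', hα'⟩, ⟨β', hβ'⟩⟩ hpq
    have h := glueB_inj_pair (Subtype.ext_iff.1 hpq)
    simp only [Prod.mk.injEq, Subtype.mk.injEq]
    exact ⟨h.1, h.2⟩
  · rintro ⟨π, hπ⟩
    rw [hs, Finset.mem_filter] at hπ
    obtain ⟨_, hav, hP, hQ⟩ := hπ
    obtain ⟨α, β, hα, hβ, heq⟩ := decompB π hav hP hQ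
    exact ⟨⟨⟨α, hα⟩, ⟨β, hβ⟩⟩, Subtype.ext heq⟩

lemma e_zero : e 0 = 1 := by
  rw [e]
  haveI : Unique {π : Equiv.Perm (Fin 0) // AvoidsNonconsec132 π} :=
    ⟨⟨⟨1, fun i => i.elim0⟩⟩, fun x => Subtype.ext (Equiv.ext fun i => i.elim0)⟩
  exact Nat.card_unique

lemma e_rec (m : ℕ) :
    e (m + 1) = (∑ p ∈ Finset.range (m + 1), e p * e (m - p))
      + (∑ p ∈ Finset.range (m - 1), e p * e (m - 2 - p)) := by
  classical
  have h0 : e (m + 1)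
      = ((Finset.univ : Finset (Equiv.Perm (Fin (m + 1)))).filter
          (fun π => AvoidsNonconsec132 π)).card := by
    rw [e, Nat.card_eq_fintype_card]
    exact Fintype.card_subtype _
  set S := (Finset.univ : Finset (Equiv.Perm (Fin (m + 1)))).filter
      (fun π => AvoidsNonconsec132 π) with hS
  have hsplit : (S.filter (fun π => ¬ Q π)).card + (S.filter (fun π => Q π)).card
      = S.card := by
    rw [add_comm]
    exact Finset.card_filter_add_card_filter_not (fun π => Q π)
  rw [h0, ← hsplit]
  congr 1
  · -- case A count
    rw [Finset.card_eq_sum_card_fiberwise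
      (f := fun π => P π) (t := Finset.range (m + 1))
      (fun π _ => Finset.mem_range.2 (P_lt π))]
    apply Finset.sum_congr rfl
    intro p hp
    have hpm : p ≤ m := by have := Finset.mem_range.1 hp; omega
    obtain ⟨b, rfl⟩ : ∃ b, m = p + b := ⟨m - p, by omega⟩
    have hset : (S.filter (fun π => ¬ Q π)).filter (fun π => P π = p)
        = (Finset.univ : Finset (Equiv.Perm (Fin (p + b + 1)))).filter
            (fun π => AvoidsNonconsec132 π ∧ P π = p ∧ ¬ Q π) := by
      ext π
      simp only [hS, Finset.mem_filter, Finset.mem_univ, true_and]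
      tauto
    rw [hset, cardA p b, Nat.add_sub_cancel_left]
  · -- case B count
    rw [Finset.card_eq_sum_card_fiberwise
      (f := fun π => P π) (t := Finset.range (m + 1))
      (fun π _ => Finset.mem_range.2 (P_lt π))]
    have hzero : ∀ p ∈ Finset.range (m + 1), p ∉ Finset.Ico 1 m →
        ((S.filter (fun π => Q π)).filter (fun π => P π = p)).card = 0 := by
      intro p _ hpn
      rw [Finset.card_eq_zero, Finset.filter_eq_empty_iff]
      intro π hπ
      rw [Finset.mem_filter] at hπ
      obtain ⟨q1, q2, _⟩ := hπ.2
      rw [Finset.mem_Ico] at hpn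
      push_neg at hpn
      intro hPp
      rcases Nat.lt_or_ge p 1 with h | h
      · omega
      · have := hpn h; omega
    rw [← Finset.sum_subset (fun x hx => Finset.mem_range.2 (by
        have := Finset.mem_Ico.1 hx; omega)) hzero]
    rw [Finset.sum_Ico_eq_sum_range]
    apply Finset.sum_congr rfl
    intro q hq
    have hqm : q < m - 1 := Finset.mem_range.1 hq
    obtain ⟨b, rfl⟩ : ∃ b, m = q + b + 2 := ⟨m - q - 2, by omega⟩
    have hset : (S.filter (fun π => Q π)).filter (fun π => P π = 1 + q)
        = (Finset.univ : Finset (Equiv.Perm (Fin (q + b + 3)))).filter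
            (fun π => AvoidsNonconsec132 π ∧ P π = q + 1 ∧ Q π) := by
      ext π
      simp only [hS, Finset.mem_filter, Finset.mem_univ, true_and]
      constructor
      · rintro ⟨⟨ha, hq'⟩, hp⟩; exact ⟨ha, by omega, hq'⟩
      · rintro ⟨ha, hp, hq'⟩; exact ⟨⟨ha, hq'⟩, by omega⟩
    rw [hset, cardB q b]
    congr 2
    omega

end A132

open PowerSeries Finset in
theorem genfun_132_quadratic' :
    (X + X ^ 3) * (PowerSeries.mk fun n => (e n : ℚ)) ^ 2
      - (PowerSeries.mk fun n => (e n : ℚ)) + 1 = 0 := by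
  set F : PowerSeries ℚ := PowerSeries.mk fun n => (e n : ℚ) with hF
  have hF2 : ∀ k, (PowerSeries.coeff k) (F ^ 2)
      = ∑ p ∈ Finset.range (k + 1), (e p : ℚ) * (e (k - p) : ℚ) := by
    intro k
    rw [sq, PowerSeries.coeff_mul, Finset.Nat.sum_antidiagonal_eq_sum_range_succ_mk]
    simp [hF, PowerSeries.coeff_mk]
  have hzero1 : ∀ g : PowerSeries ℚ, (PowerSeries.coeff 0) (X * g) = 0 := by
    intro g
    rw [PowerSeries.coeff_zero_eq_constantCoeff, map_mul, PowerSeries.constantCoeff_X,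
      zero_mul]
  apply PowerSeries.ext
  intro n
  rw [map_zero, add_mul, map_add, map_sub, map_add]
  rcases n with _ | n
  · -- constant coefficient
    have c1 := hzero1 (F ^ 2)
    have c2 : (PowerSeries.coeff 0) (X ^ 3 * F ^ 2) = 0 := by
      rw [PowerSeries.coeff_zero_eq_constantCoeff, map_mul, map_pow,
        PowerSeries.constantCoeff_X]
      norm_num
    have c3 : (PowerSeries.coeff 0) F = 1 := by
      rw [hF, PowerSeries.coeff_mk, A132.e_zero]
      norm_num
    have c4 : (PowerSeries.coeff 0) (1 : PowerSeries ℚ) = 1 := by simp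
    rw [c1, c2, c3, c4]
    ring
  · -- coefficient n+1
    have c1 : (PowerSeries.coeff (n + 1)) (X * F ^ 2)
        = (PowerSeries.coeff n) (F ^ 2) := PowerSeries.coeff_succ_X_mul n (F ^ 2)
    have c2 : (PowerSeries.coeff (n + 1)) (X ^ 3 * F ^ 2)
        = ∑ p ∈ Finset.range (n - 1), (e p : ℚ) * (e (n - 2 - p) : ℚ) := by
      have hsplit : X ^ 3 * F ^ 2 = X * (X * (X * F ^ 2)) := by ring
      rw [hsplit, PowerSeries.coeff_succ_X_mul]
      rcases n with _ | n
      · rw [hzero1]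
        simp
      · rw [PowerSeries.coeff_succ_X_mul]
        rcases n with _ | n
        · rw [hzero1]
          simp
        · rw [PowerSeries.coeff_succ_X_mul, hF2]
          apply Finset.sum_congr
          · congr 1
          · intro p _
            congr 2
    have c3 : (PowerSeries.coeff (n + 1)) F = (e (n + 1) : ℚ) := by
      rw [hF, PowerSeries.coeff_mk]
    have c4 : (PowerSeries.coeff (n + 1)) (1 : PowerSeries ℚ) = 0 := by
      rw [PowerSeries.coeff_one]
      simp
    rw [c1, c2, c3, c4, hF2]
    have hcast : (e (n + 1) : ℚ)
        = (∑ p ∈ Finset.range (n + 1), (e p : ℚ) * (e (n - p) : ℚ))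
          + ∑ p ∈ Finset.range (n - 1), (e p : ℚ) * (e (n - 2 - p) : ℚ) := by
      have := A132.e_rec n
      push_cast [this]
      ring
    rw [hcast]
    ring

open PowerSeries in
/-- The generating function `F(x) = ∑ e_n xⁿ` satisfies `(x + x³) F² - F + 1 = 0`. -/
theorem genfun_132_quadratic :
    (X + X ^ 3) * (PowerSeries.mk fun n => (e n : ℚ)) ^ 2
      - (PowerSeries.mk fun n => (e n : ℚ)) + 1 = 0 := by
  exact genfun_132_quadratic'
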